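/- Let q be a prime power and f a nonzero polynomial in F_q[x_1,...,x_l] whose monomials all have exponents with each coordinate less than q. Then the number of zeros of f in F_q^l is at most the number of points a in {0,...,q-1}^l such that x^a is not divisible by the leading monomial of f (with respect to a fixed monomial order); equivalently, if the leading monomial of f is x^c with c in {0,...,q-1}^l, then |Z(f)| ≤ q^l − ∏_{i=1}^l (q − c_i). -/

import Mathlib

open scoped MonomialOrder

namespace FootprintAux

open MvPolynomial

universe u

/-- exponent reduction modulo the field equations -/
def redN (q n : ℕ) : ℕ := if n = 0 then 0 else (n - 1) % (q - 1) + 1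

lemma redN_le (q n : ℕ) : redN q n ≤ n := by
  unfold redN; split
  · omega
  · have := Nat.mod_le (n - 1) (q - 1); omega

lemma redN_lt (q n : ℕ) (hq : 1 < q) : redN q n < q := by
  unfold redN; split
  · omega
  · have : (n - 1) % (q - 1) < q - 1 := Nat.mod_lt _ (by omega); omega

lemma redN_eq (q n : ℕ) (h : n < q) : redN q n = n := by
  unfold redN; split
  · omega
  · rw [Nat.mod_eq_of_lt (by omega)]; omega

lemma pow_redN {F : Type u} [Field F] [Fintype F] (a : F) (n : ℕ) :
    a ^ redN (Fintype.card F) n = a ^ n := by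
  set q := Fintype.card F with hq
  have hq2 : 1 < q := Fintype.one_lt_card
  unfold redN
  split
  · next h => subst h; rfl
  · next h =>
    rcases eq_or_ne a 0 with rfl | ha
    · rw [zero_pow (by omega), zero_pow h]
    · have h1 : a ^ (q - 1) = 1 := FiniteField.pow_card_sub_one_eq_one a ha
      have hn : n = (q - 1) * ((n - 1) / (q - 1)) + ((n - 1) % (q - 1) + 1) := by
        have := Nat.div_add_mod (n - 1) (q - 1); omega
      conv_rhs => rw [hn, pow_add, pow_mul, h1, one_pow, one_mul]

variable {l : ℕ}

/-- exponent-vector reduction -/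
noncomputable def redE (q : ℕ) (e : Fin l →₀ ℕ) : Fin l →₀ ℕ :=
  Finsupp.mapRange (redN q) (by simp [redN]) e

lemma redE_apply (q : ℕ) (e : Fin l →₀ ℕ) (i : Fin l) : redE q e i = redN q (e i) :=
  Finsupp.mapRange_apply

lemma redE_le (q : ℕ) (e : Fin l →₀ ℕ) : redE q e ≤ e :=
  Finsupp.le_def.mpr fun i => by rw [redE_apply]; exact redN_le q (e i)

lemma redE_eq (q : ℕ) (e : Fin l →₀ ℕ) (h : ∀ i, e i < q) : redE q e = e := by
  ext i; rw [redE_apply]; exact redN_eq q (e i) (h i)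

/-- a polynomial with all exponents `< card F` vanishing everywhere is zero -/
lemma zero_of_eval {F : Type u} [Field F] [Fintype F] (p : MvPolynomial (Fin l) F)
    (hdeg : ∀ s ∈ p.support, ∀ i, s i ≤ Fintype.card F - 1)
    (h : ∀ v : Fin l → F, eval v p = 0) : p = 0 := by
  classical
  let e : Fin l ≃ ULift.{u} (Fin l) := Equiv.ulift.symm
  have hinj : Function.Injective (⇑e) := e.injective
  have h0 : rename (⇑e) p = 0 := by
    apply eq_zero_of_eval_eq_zero
    · intro v; rw [eval_rename]; exact h _
    · rw [mem_restrictDegree]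
      intro s hs i
      rw [support_rename_of_injective hinj] at hs
      obtain ⟨d, hd, rfl⟩ := Finset.mem_image.mp hs
      have hsi : Finsupp.mapDomain (⇑e) d i = d (e.symm i) := by
        conv_lhs => rw [← e.apply_symm_apply i]
        exact Finsupp.mapDomain_apply hinj d _
      rw [hsi]
      exact hdeg d hd _
  have := rename_injective (⇑e) hinj (R := F)
  apply this
  rw [h0, map_zero]

lemma split_max {m : MonomialOrder (Fin l)} {u v dg c : Fin l →₀ ℕ}
    (hu : u ≼[m] dg) (hv : v ≼[m] c) (h : u + v = dg + c) : u = dg ∧ v = c := by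
  have h' : m.toSyn u + m.toSyn v = m.toSyn dg + m.toSyn c := by
    rw [← map_add, ← map_add, h]
  have h1 : m.toSyn u = m.toSyn dg := by
    rcases lt_or_eq_of_le hu with hlt | heq
    · exact absurd h' (ne_of_lt (add_lt_add_of_lt_of_le hlt hv))
    · exact heq
  have hu' : u = dg := m.toSyn.injective h1
  subst hu'
  exact ⟨rfl, add_left_cancel h⟩

/-- key lemma: a nonzero multiple with small exponents is nonzero somewhere -/
lemma exists_eval_mul_ne_zero {F : Type u} [Field F] [Fintype F]
    (m : MonomialOrder (Fin l)) (f : MvPolynomial (Fin l) F)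
    (c : Fin l →₀ ℕ) (hc : c ∈ f.support) (hmax : ∀ d ∈ f.support, d ≼[m] c)
    (g : MvPolynomial (Fin l) F) (hg : g ≠ 0)
    (hsg : ∀ b ∈ g.support, ∀ i, b i + c i < Fintype.card F) :
    ∃ P : Fin l → F, eval P (g * f) ≠ 0 := by
  classical
  set q := Fintype.card F with hqdef
  have hq2 : 1 < q := Fintype.one_lt_card
  by_contra hall
  push_neg at hall
  obtain ⟨dg, hdg, hdgmax⟩ := Finset.exists_max_image g.support (fun e => m.toSyn e)
    (support_nonempty.mpr hg)
  set t := dg + c with ht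
  have hmemad : (dg, c) ∈ Finset.HasAntidiagonal.antidiagonal t := Finset.HasAntidiagonal.mem_antidiagonal.mpr ht.symm
  have hcoefft : coeff t (g * f) = coeff dg g * coeff c f := by
    rw [coeff_mul]
    apply Finset.sum_eq_single_of_mem (dg, c) hmemad
    rintro ⟨u, v⟩ huv hne
    rw [Finset.HasAntidiagonal.mem_antidiagonal] at huv
    by_contra hne0
    obtain ⟨h1, h2⟩ := mul_ne_zero_iff.mp hne0
    obtain ⟨e1, e2⟩ := split_max (hdgmax u (mem_support_iff.mpr h1))
      (hmax v (mem_support_iff.mpr h2)) huv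
    exact hne (Prod.ext e1 e2)
  have hcne : coeff t (g * f) ≠ 0 := by
    rw [hcoefft]
    exact mul_ne_zero (mem_support_iff.mp hdg) (mem_support_iff.mp hc)
  have htmax : ∀ e ∈ (g * f).support, e ≼[m] t := by
    intro e he
    have hmem := support_mul g f he
    rw [Finset.mem_add] at hmem
    obtain ⟨u, hu, v, hv, rfl⟩ := hmem
    rw [ht, map_add, map_add]
    exact add_le_add (hdgmax u hu) (hmax v hv)
  have htbox : ∀ i, t i < q := by
    intro i
    rw [ht, Finsupp.add_apply]
    exact hsg dg hdg i
  set h := ∑ e ∈ (g * f).support, monomial (redE q e) (coeff e (g * f)) with hh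
  have hmem : ∀ s ∈ h.support, ∀ i, s i ≤ q - 1 := by
    intro s hs i
    have hsub := support_sum hs
    obtain ⟨e, _, hse⟩ := Finset.mem_biUnion.mp hsub
    have := support_monomial_subset hse
    rw [Finset.mem_singleton] at this
    subst this
    have := redN_lt q (e i) hq2
    rw [redE_apply]
    omega
  have heval : ∀ P : Fin l → F, eval P h = 0 := by
    intro P
    rw [hh, map_sum]
    have hterm : ∀ e ∈ (g * f).support,
        eval P (monomial (redE q e) (coeff e (g * f)))
          = coeff e (g * f) * ∏ i, P i ^ e i := by
      intro e _
      rw [eval_monomial]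
      congr 1
      rw [Finsupp.prod_pow]
      apply Finset.prod_congr rfl
      intro i _
      rw [redE_apply, hqdef, pow_redN]
    rw [Finset.sum_congr rfl hterm, ← eval_eq']
    exact hall P
  have h0 : h = 0 := zero_of_eval h (by rw [← hqdef]; exact hmem) heval
  have hch : coeff t h = coeff t (g * f) := by
    rw [hh, coeff_sum]
    rw [Finset.sum_eq_single_of_mem t (mem_support_iff.mpr hcne)]
    · rw [coeff_monomial, if_pos (redE_eq q t htbox)]
    · intro e he hne
      rw [coeff_monomial, if_neg]
      intro habs
      apply hne
      apply m.toSyn.injective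
      apply le_antisymm (htmax e he)
      calc m.toSyn t = m.toSyn (redE q e) := by rw [habs]
        _ ≤ m.toSyn e := m.toSyn_monotone (redE_le q e)
  rw [h0, coeff_zero] at hch
  exact hcne hch.symm

end FootprintAux

open FootprintAux MvPolynomial in
/-- Footprint bound: the number of zeros of a nonzero polynomial `f` over `F_q`,
all of whose exponents have coordinates `< q`, is at most
`q^l - ∏ (q - c i)` where `x^c` is the leading monomial of `f` w.r.t. a monomial order. -/
theorem footprint_bound (q l : ℕ) (F : Type*) [Field F] [Fintype F] [DecidableEq F]
    (hq : Fintype.card F = q)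
    (f : MvPolynomial (Fin l) F) (hf : f ≠ 0)
    (hsupp : ∀ d ∈ f.support, ∀ i, d i < q)
    (m : MonomialOrder (Fin l)) (c : Fin l →₀ ℕ)
    (hc : c ∈ f.support) (hmax : ∀ d ∈ f.support, d ≼[m] c) :
    (Finset.univ.filter fun P : Fin l → F => MvPolynomial.eval P f = 0).card
      ≤ q ^ l - ∏ i, (q - c i) := by
  classical
  subst hq
  set q := Fintype.card F with hqdef
  have hq2 : 1 < q := Fintype.one_lt_card
  have hci : ∀ i, c i < q := hsupp c hc
  -- the embedding of small exponent vectors into finsupps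
  set emb : (∀ i : Fin l, Fin (q - c i)) → (Fin l →₀ ℕ) :=
    fun b => Finsupp.equivFunOnFinite.symm fun i => (b i : ℕ) with hembdef
  have hembap : ∀ b i, emb b i = b i := fun b i => rfl
  have embinj : Function.Injective emb := by
    intro b1 b2 hb
    funext i
    have := congrArg (fun s : Fin l →₀ ℕ => s i) hb
    simp only [hembap] at this
    exact Fin.val_injective this
  set Φ : ((∀ i : Fin l, Fin (q - c i)) → F)
      → ({P : Fin l → F // eval P f ≠ 0} → F) :=
    fun lam Pu => eval Pu.1 ((∑ b, monomial (emb b) (lam b)) * f) with hΦdef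
  have hΦ : Function.Injective Φ := by
    intro l1 l2 hψ
    set g : MvPolynomial (Fin l) F := ∑ b, monomial (emb b) (l1 b - l2 b) with hgd
    have hgsplit : g = (∑ b, monomial (emb b) (l1 b)) - (∑ b, monomial (emb b) (l2 b)) := by
      rw [← Finset.sum_sub_distrib]
      apply Finset.sum_congr rfl
      intro b _
      rw [map_sub]
    have hg0 : g = 0 := by
      by_contra hgne
      have hsup : ∀ b ∈ g.support, ∀ i, b i + c i < Fintype.card F := by
        intro b hb i
        obtain ⟨b', _, hmemb⟩ := Finset.mem_biUnion.mp (support_sum hb)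
        have hb' := support_monomial_subset hmemb
        rw [Finset.mem_singleton] at hb'
        subst hb'
        rw [hembap]
        have := (b' i).is_lt
        have := hci i
        omega
      obtain ⟨P, hP⟩ := exists_eval_mul_ne_zero m f c hc hmax g hgne hsup
      apply hP
      rcases eq_or_ne (eval P f) 0 with h0 | h0
      · rw [map_mul, h0, mul_zero]
      · have hval := congrFun hψ ⟨P, h0⟩
        simp only [hΦdef] at hval
        rw [hgsplit, sub_mul, map_sub, hval, sub_self]
    funext b
    have hcb : coeff (emb b) g = l1 b - l2 b := by
      rw [hgd, coeff_sum]
      rw [Finset.sum_eq_single b]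
      · rw [coeff_monomial, if_pos rfl]
      · intro b' _ hne
        rw [coeff_monomial, if_neg (fun hh => hne (embinj hh))]
      · intro habs; exact absurd (Finset.mem_univ b) habs
    rw [hg0, coeff_zero] at hcb
    exact sub_eq_zero.mp hcb.symm
  have hcard := Fintype.card_le_of_injective Φ hΦ
  rw [Fintype.card_fun, Fintype.card_fun] at hcard
  rw [Fintype.card_pi] at hcard
  simp only [Fintype.card_fin] at hcard
  rw [Fintype.card_subtype] at hcard
  rw [← hqdef] at hcard
  have hUcount : (∏ i, (q - c i))
      ≤ (Finset.univ.filter fun P : Fin l → F => eval P f ≠ 0).card :=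
    (Nat.pow_le_pow_iff_right hq2).mp hcard
  have hsplitcard := Finset.card_filter_add_card_filter_not
    (s := (Finset.univ : Finset (Fin l → F))) (p := fun P : Fin l → F => eval P f = 0)
  have huniv : (Finset.univ : Finset (Fin l → F)).card = q ^ l := by
    rw [Finset.card_univ, Fintype.card_fun, Fintype.card_fin, hqdef]
  have hsame : (Finset.univ.filter fun P : Fin l → F => ¬ eval P f = 0).card
      = (Finset.univ.filter fun P : Fin l → F => eval P f ≠ 0).card := by
    congr 1
  rw [huniv, hsame] at hsplitcard
  omega
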